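/- Let 𝕂 be a non-discrete Hausdorff topological field, E, F, H Hausdorff topological 𝕂-vector spaces, U ⊆ E, V ⊆ F open, and f : U → V, g : V → H continuous maps admitting continuous difference-quotient maps f¹ : U⁽¹⁾ → F (with image of f contained in V) and g¹ : V⁽¹⁾ → H satisfying f(x+t•v) − f(x) = t•f¹(x,v,t) and g(y+t•w) − g(y) = t•g¹(y,w,t). Then for every (x,v,t) ∈ U⁽¹⁾ we have (f(x), f¹(x,v,t), t) ∈ V⁽¹⁾, the map (x,v,t) ↦ g¹(f(x), f¹(x,v,t), t) is a continuous difference-quotient map for g ∘ f, and in particular d(g∘f)(x) v = dg(f(x))(df(x) v) for all x ∈ U, v ∈ E. -/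

import Mathlib

open Topology Filter


/-- BGN chain rule: if `f : U → V` and `g : V → H` admit continuous difference-quotient maps
`f¹`, `g¹`, then `(f(x), f¹(x,v,t), t) ∈ V⁽¹⁾` for `(x,v,t) ∈ U⁽¹⁾`, the map
`(x,v,t) ↦ g¹(f(x), f¹(x,v,t), t)` is a continuous difference-quotient map for `g ∘ f`,
and `d(g∘f)(x)v = dg(f(x))(df(x)v)`. -/
theorem stmt_1 (𝕂 : Type*) [Field 𝕂] [TopologicalSpace 𝕂] [IsTopologicalRing 𝕂] [T2Space 𝕂]
    (hK : Dense {t : 𝕂 | t ≠ 0})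
    (E F H : Type*) [AddCommGroup E] [Module 𝕂 E] [TopologicalSpace E]
    [IsTopologicalAddGroup E] [ContinuousSMul 𝕂 E] [T2Space E]
    [AddCommGroup F] [Module 𝕂 F] [TopologicalSpace F]
    [IsTopologicalAddGroup F] [ContinuousSMul 𝕂 F] [T2Space F]
    [AddCommGroup H] [Module 𝕂 H] [TopologicalSpace H]
    [IsTopologicalAddGroup H] [ContinuousSMul 𝕂 H] [T2Space H]
    (U : Set E) (hU : IsOpen U) (V : Set F) (hV : IsOpen V)
    (f : E → F) (g : F → H)
    (hf : ContinuousOn f U) (hg : ContinuousOn g V)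
    (hfV : ∀ x ∈ U, f x ∈ V)
    (f1 : E × E × 𝕂 → F) (g1 : F × F × 𝕂 → H)
    (hf1cont : ContinuousOn f1 {p : E × E × 𝕂 | p.1 ∈ U ∧ p.1 + p.2.2 • p.2.1 ∈ U})
    (hg1cont : ContinuousOn g1 {q : F × F × 𝕂 | q.1 ∈ V ∧ q.1 + q.2.2 • q.2.1 ∈ V})
    (hf1 : ∀ (x v : E) (t : 𝕂), x ∈ U → x + t • v ∈ U →
      f (x + t • v) - f x = t • f1 (x, v, t))
    (hg1 : ∀ (y w : F) (t : 𝕂), y ∈ V → y + t • w ∈ V →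
      g (y + t • w) - g y = t • g1 (y, w, t)) :
    -- the "lifted" point lies in V⁽¹⁾:
    (∀ (x v : E) (t : 𝕂), x ∈ U → x + t • v ∈ U →
      f x ∈ V ∧ f x + t • f1 (x, v, t) ∈ V) ∧
    -- (x,v,t) ↦ g¹(f(x), f¹(x,v,t), t) is a difference-quotient map for g ∘ f:
    (∀ (x v : E) (t : 𝕂), x ∈ U → x + t • v ∈ U →
      g (f (x + t • v)) - g (f x) = t • g1 (f x, f1 (x, v, t), t)) ∧
    -- and it is continuous on U⁽¹⁾:
    ContinuousOn (fun p : E × E × 𝕂 => g1 (f p.1, f1 p, p.2.2))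
      {p : E × E × 𝕂 | p.1 ∈ U ∧ p.1 + p.2.2 • p.2.1 ∈ U} ∧
    -- in particular d(g∘f)(x) = dg(f(x)) ∘ df(x): any continuous difference-quotient map `h`
    -- of `g ∘ f` satisfies `h(x,v,0) = g¹(f(x), f¹(x,v,0), 0)`.
    (∀ h : E × E × 𝕂 → H,
      ContinuousOn h {p : E × E × 𝕂 | p.1 ∈ U ∧ p.1 + p.2.2 • p.2.1 ∈ U} →
      (∀ (x v : E) (t : 𝕂), x ∈ U → x + t • v ∈ U →
        g (f (x + t • v)) - g (f x) = t • h (x, v, t)) →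
      ∀ x ∈ U, ∀ v : E, h (x, v, 0) = g1 (f x, f1 (x, v, 0), 0)) := by
  classical
  have key : ∀ (x v : E) (t : 𝕂), x ∈ U → x + t • v ∈ U →
      f x ∈ V ∧ f x + t • f1 (x, v, t) ∈ V := by
    intro x v t hx hxt
    refine ⟨hfV x hx, ?_⟩
    have e : f x + t • f1 (x, v, t) = f (x + t • v) := by
      rw [← hf1 x v t hx hxt]; abel
    rw [e]; exact hfV _ hxt
  have dq : ∀ (x v : E) (t : 𝕂), x ∈ U → x + t • v ∈ U →
      g (f (x + t • v)) - g (f x) = t • g1 (f x, f1 (x, v, t), t) := by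
    intro x v t hx hxt
    obtain ⟨h1, h2⟩ := key x v t hx hxt
    have e2 := hg1 (f x) (f1 (x, v, t)) t h1 h2
    have e : f x + t • f1 (x, v, t) = f (x + t • v) := by
      rw [← hf1 x v t hx hxt]; abel
    rw [e] at e2
    exact e2
  have hcontk : ContinuousOn (fun p : E × E × 𝕂 => g1 (f p.1, f1 p, p.2.2))
      {p : E × E × 𝕂 | p.1 ∈ U ∧ p.1 + p.2.2 • p.2.1 ∈ U} := by
    have hmap : Set.MapsTo (fun p : E × E × 𝕂 => (f p.1, f1 p, p.2.2))
        {p : E × E × 𝕂 | p.1 ∈ U ∧ p.1 + p.2.2 • p.2.1 ∈ U}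
        {q : F × F × 𝕂 | q.1 ∈ V ∧ q.1 + q.2.2 • q.2.1 ∈ V} :=
      fun p hp => key p.1 p.2.1 p.2.2 hp.1 hp.2
    refine hg1cont.comp ?_ hmap
    exact (hf.comp continuous_fst.continuousOn (fun p hp => hp.1)).prodMk
      (hf1cont.prodMk (continuous_snd.snd.continuousOn))
  refine ⟨key, dq, hcontk, ?_⟩
  intro h hcont hdq x hx v
  set S : Set (E × E × 𝕂) := {p : E × E × 𝕂 | p.1 ∈ U ∧ p.1 + p.2.2 • p.2.1 ∈ U} with hS
  have hSopen : IsOpen S := by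
    have : S = (fun p : E × E × 𝕂 => (p.1, p.1 + p.2.2 • p.2.1)) ⁻¹' (U ×ˢ U) := rfl
    rw [this]
    exact (hU.prod hU).preimage (by fun_prop)
  have hmem : ((x, v, 0) : E × E × 𝕂) ∈ S := by
    simp only [hS, Set.mem_setOf_eq, zero_smul, add_zero]
    exact ⟨hx, hx⟩
  have hc : Continuous (fun t : 𝕂 => ((x, v, t) : E × E × 𝕂)) := by fun_prop
  have hW : ∀ᶠ t : 𝕂 in 𝓝 0, ((x, v, t) : E × E × 𝕂) ∈ S :=
    hc.continuousAt.eventually_mem (hSopen.mem_nhds hmem)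
  have hNB : (𝓝[≠] (0 : 𝕂)).NeBot := by
    rw [← mem_closure_iff_nhdsWithin_neBot]
    have : ({t : 𝕂 | t ≠ 0} : Set 𝕂) = {(0 : 𝕂)}ᶜ := by ext t; simp
    rw [← this]
    exact hK 0
  have hca : ContinuousAt (fun t : 𝕂 => ((x, v, t) : E × E × 𝕂)) 0 := hc.continuousAt
  have ht1 : Filter.Tendsto (fun t : 𝕂 => h (x, v, t)) (𝓝[≠] 0) (𝓝 (h (x, v, 0))) := by
    have := (hcont.continuousAt (hSopen.mem_nhds hmem)).tendsto.comp hca.tendsto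
    exact this.mono_left nhdsWithin_le_nhds
  have ht2 : Filter.Tendsto (fun t : 𝕂 => g1 (f x, f1 (x, v, t), t)) (𝓝[≠] 0)
      (𝓝 (g1 (f x, f1 (x, v, 0), 0))) := by
    have := (hcontk.continuousAt (hSopen.mem_nhds hmem)).tendsto.comp hca.tendsto
    exact this.mono_left nhdsWithin_le_nhds
  have heq : ∀ᶠ t : 𝕂 in 𝓝[≠] 0,
      h (x, v, t) = g1 (f x, f1 (x, v, t), t) := by
    filter_upwards [nhdsWithin_le_nhds hW, self_mem_nhdsWithin] with t htS ht0
    have ht0' : t ≠ 0 := ht0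
    have h1 := hdq x v t htS.1 htS.2
    have h2 := dq x v t htS.1 htS.2
    calc h (x, v, t) = t⁻¹ • (t • h (x, v, t)) := (inv_smul_smul₀ ht0' _).symm
      _ = t⁻¹ • (t • g1 (f x, f1 (x, v, t), t)) := by rw [← h1, h2]
      _ = g1 (f x, f1 (x, v, t), t) := inv_smul_smul₀ ht0' _
  exact tendsto_nhds_unique (ht1.congr' heq) ht2
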